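/- arXiv:math/0305153 — 3 statements merged into one kernel-verified Lean document; each statement's English description precedes it below -/
import Mathlib

section
/- The group of increasing piecewise linear homeomorphisms of [0,1] with finitely many breakpoints is bi-orderable: the order defined by f < g iff at the smallest point c where f and g differ (i.e., the supremum of the set of t with f = g on [0,t]), the right derivative of f at c is less than the right derivative of g at c, is a total order invariant under composition on both sides. -/
/-- `f` is an increasing piecewise linear homeomorphism of `[0,1]`
(fixing the endpoints) with finitely many breakpoints. -/
def IsPLF (f : ℝ → ℝ) : Prop :=
  f 0 = 0 ∧ f 1 = 1 ∧ StrictMonoOn f (Set.Icc 0 1) ∧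
  ∃ (n : ℕ) (a : Fin (n + 1) → ℝ),
    StrictMono a ∧ a 0 = 0 ∧ a (Fin.last n) = 1 ∧
    ∀ i : Fin n, ∃ k : ℝ, ∀ t ∈ Set.Icc (a i.castSucc) (a i.succ),
      f t = f (a i.castSucc) + k * (t - a i.castSucc)

/-- `f < g` in the order determined by the first point of difference:
there is `c ∈ [0,1)` with `f = g` on `[0,c]`, and on a right neighbourhood of
`c` both `f` and `g` are affine, the right derivative (slope) of `f` at `c`
being smaller than that of `g`. -/
def plfLt (f g : ℝ → ℝ) : Prop :=
  ∃ c ∈ Set.Ico (0:ℝ) 1, (∀ t ∈ Set.Icc (0:ℝ) c, f t = g t) ∧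
    ∃ δ > (0:ℝ), ∃ kf kg : ℝ, kf < kg ∧
      (∀ t ∈ Set.Icc c (c + δ), f t = f c + kf * (t - c)) ∧
      (∀ t ∈ Set.Icc c (c + δ), g t = g c + kg * (t - c))

lemma plf_find_interval {n : ℕ} {b : Fin (n + 1) → ℝ} {x : ℝ}
    (h0 : b 0 ≤ x) (h1 : x < b (Fin.last n)) :
    ∃ i : Fin n, b i.castSucc ≤ x ∧ x < b i.succ := by
  classical
  set S : Finset (Fin (n + 1)) := Finset.univ.filter (fun i => b i ≤ x) with hS
  have hne : S.Nonempty := ⟨0, by simp [hS, h0]⟩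
  set i₀ := S.max' hne with hi₀
  have hmem : i₀ ∈ S := S.max'_mem hne
  have hbi₀ : b i₀ ≤ x := by simpa [hS] using hmem
  have hlt : i₀ < Fin.last n := by
    rcases lt_or_eq_of_le (Fin.le_last i₀) with h | h
    · exact h
    · exact absurd (h ▸ hbi₀) (not_le.mpr h1)
  have hlt' : (i₀ : ℕ) < n := by
    have := hlt
    simp [Fin.lt_def, Fin.last] at this
    exact this
  refine ⟨⟨i₀.1, hlt'⟩, ?_, ?_⟩
  · have : (Fin.castSucc ⟨i₀.1, hlt'⟩ : Fin (n+1)) = i₀ := by ext; simp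
    rw [this]; exact hbi₀
  · by_contra hcon
    push_neg at hcon
    have hmem2 : (Fin.succ ⟨i₀.1, hlt'⟩ : Fin (n+1)) ∈ S := by
      simp only [hS, Finset.mem_filter, Finset.mem_univ, true_and]
      exact hcon
    have h3 := S.le_max' _ hmem2
    rw [← hi₀] at h3
    have h4 : (i₀ : ℕ) + 1 ≤ (i₀ : ℕ) := by
      have := Fin.le_def.mp h3
      simpa using this
    omega

/-- find interval, upper-open version: `b i < x ≤ b (i+1)` -/
lemma plf_find_interval' {n : ℕ} {b : Fin (n + 1) → ℝ} {x : ℝ}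
    (h0 : b 0 < x) (h1 : x ≤ b (Fin.last n)) :
    ∃ i : Fin n, b i.castSucc < x ∧ x ≤ b i.succ := by
  classical
  set S : Finset (Fin (n + 1)) := Finset.univ.filter (fun i => x ≤ b i) with hS
  have hne : S.Nonempty := ⟨Fin.last n, by simp [hS, h1]⟩
  set i₀ := S.min' hne with hi₀
  have hmem : i₀ ∈ S := S.min'_mem hne
  have hbi₀ : x ≤ b i₀ := by simpa [hS] using hmem
  have hlt : 0 < i₀ := by
    rcases Nat.eq_zero_or_pos (i₀ : ℕ) with h | h
    · exfalso
      have : i₀ = 0 := Fin.ext h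
      rw [this] at hbi₀; linarith
    · exact h
  have hlt' : (i₀ : ℕ) - 1 < n := by
    have := i₀.2; omega
  refine ⟨⟨(i₀ : ℕ) - 1, hlt'⟩, ?_, ?_⟩
  · by_contra hcon
    push_neg at hcon
    have hmem2 : (Fin.castSucc ⟨(i₀:ℕ) - 1, hlt'⟩ : Fin (n+1)) ∈ S := by
      simp only [hS, Finset.mem_filter, Finset.mem_univ, true_and]
      exact hcon
    have h3 := S.min'_le _ hmem2
    rw [← hi₀] at h3
    have h4 := Fin.le_def.mp h3
    simp [Fin.castSucc, Fin.castAdd, Fin.castLE] at h4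
    omega
  · have : (Fin.succ ⟨(i₀:ℕ) - 1, hlt'⟩ : Fin (n+1)) = i₀ := by
      ext; simp; omega
    rw [this]; exact hbi₀

lemma plf_total {f g : ℝ → ℝ} (hf : IsPLF f) (hg : IsPLF g)
    (hne : ¬ Set.EqOn f g (Set.Icc 0 1)) : plfLt f g ∨ plfLt g f := by
  obtain ⟨hf0, hf1, hfm, n, a, ha, ha0, halast, haff⟩ := hf
  obtain ⟨hg0, hg1, hgm, m, b, hb, hb0, hblast, hbaff⟩ := hg
  set S : Set ℝ := {t | t ∈ Set.Icc (0:ℝ) 1 ∧ ∀ s ∈ Set.Icc (0:ℝ) t, f s = g s} with hSdef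
  have h0S : (0:ℝ) ∈ S := by
    refine ⟨⟨le_refl _, by norm_num⟩, ?_⟩
    intro s hs
    have : s = 0 := le_antisymm hs.2 hs.1
    rw [this, hf0, hg0]
  have hSne : S.Nonempty := ⟨0, h0S⟩
  have hSbdd : BddAbove S := ⟨1, fun t ht => ht.1.2⟩
  set c := sSup S with hcdef
  have hc0 : 0 ≤ c := le_csSup hSbdd h0S
  have hc1 : c ≤ 1 := csSup_le hSne (fun t ht => ht.1.2)
  -- pointwise equality strictly below c
  have hlt : ∀ t, 0 ≤ t → t < c → f t = g t := by
    intro t ht0 htc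
    obtain ⟨s, hsS, hts⟩ := exists_lt_of_lt_csSup hSne htc
    exact hsS.2 t ⟨ht0, le_of_lt hts⟩
  -- equality at c itself
  have hceq : f c = g c := by
    rcases eq_or_lt_of_le hc0 with h | h
    · rw [← h, hf0, hg0]
    · -- 0 < c; use affine structure on left of c
      obtain ⟨i, hai, hai'⟩ := plf_find_interval' (b := a) (x := c) (by rw [ha0]; exact h) (by rw [halast]; exact hc1)
      obtain ⟨j, hbj, hbj'⟩ := plf_find_interval' (b := b) (x := c) (by rw [hb0]; exact h) (by rw [hblast]; exact hc1)
      obtain ⟨kf, hkf⟩ := haff i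
      obtain ⟨kg, hkg⟩ := hbaff j
      set p := max (a i.castSucc) (b j.castSucc) with hpdef
      have hpc : p < c := max_lt hai hbj
      have hp0 : 0 ≤ p := le_trans (by rw [← ha0]; exact ha.monotone (Fin.zero_le _)) (le_max_left _ _)
      set d := (c - p) / 3 with hddef
      have hd : 0 < d := by rw [hddef]; linarith
      have mem : ∀ t, p ≤ t → t ≤ c → t ∈ Set.Icc (a i.castSucc) (a i.succ) ∧ t ∈ Set.Icc (b j.castSucc) (b j.succ) := by
        intro t h1 h2
        exact ⟨⟨le_trans (le_max_left _ _) h1, le_trans h2 hai'⟩,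
               ⟨le_trans (le_max_right _ _) h1, le_trans h2 hbj'⟩⟩
      have e1f := hkf _ (mem (p + d) (by linarith) (by rw [hddef]; linarith)).1
      have e1g := hkg _ (mem (p + d) (by linarith) (by rw [hddef]; linarith)).2
      have e2f := hkf _ (mem (p + 2*d) (by linarith) (by rw [hddef]; linarith)).1
      have e2g := hkg _ (mem (p + 2*d) (by linarith) (by rw [hddef]; linarith)).2
      have ecf := hkf _ (mem c (le_of_lt hpc) (le_refl _)).1
      have ecg := hkg _ (mem c (le_of_lt hpc) (le_refl _)).2
      have q1 : f (p + d) = g (p + d) := hlt _ (by linarith) (by rw [hddef]; linarith)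
      have q2 : f (p + 2*d) = g (p + 2*d) := hlt _ (by linarith) (by rw [hddef]; linarith)
      have r1 : kf * ((p + 2*d) - a i.castSucc) - kf * ((p + d) - a i.castSucc) = kf * d := by ring
      have r2 : kg * ((p + 2*d) - b j.castSucc) - kg * ((p + d) - b j.castSucc) = kg * d := by ring
      have hkk : kf * d = kg * d := by linarith [e1f, e1g, e2f, e2g, q1, q2, r1, r2]
      have hkeq : kf = kg := mul_right_cancel₀ (ne_of_gt hd) hkk
      have r3 : kg * (c - a i.castSucc) - kg * ((p + d) - a i.castSucc) = kg * (c - p - d) := by ring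
      have r4 : kg * (c - b j.castSucc) - kg * ((p + d) - b j.castSucc) = kg * (c - p - d) := by ring
      rw [hkeq] at e1f ecf
      linarith [e1f, e1g, ecf, ecg, q1, r3, r4]
  have hcS : c ∈ S := by
    refine ⟨⟨hc0, hc1⟩, ?_⟩
    intro s hs
    rcases eq_or_lt_of_le hs.2 with h | h
    · rw [h, hceq]
    · exact hlt s hs.1 h
  have hc1' : c < 1 := by
    rcases eq_or_lt_of_le hc1 with h | h
    · exact absurd (fun t ht => hcS.2 t (h ▸ ht)) hne
    · exact h
  -- affine structure to the right of c
  obtain ⟨i, hai, hai'⟩ := plf_find_interval (b := a) (x := c) (by rw [ha0]; exact hc0) (by rw [halast]; exact hc1')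
  obtain ⟨j, hbj, hbj'⟩ := plf_find_interval (b := b) (x := c) (by rw [hb0]; exact hc0) (by rw [hblast]; exact hc1')
  obtain ⟨kf, hkf⟩ := haff i
  obtain ⟨kg, hkg⟩ := hbaff j
  set δ := min (a i.succ) (b j.succ) - c with hδdef
  have hδ : 0 < δ := by
    rw [hδdef]
    have := lt_min hai' hbj'
    linarith
  have hsub : ∀ t ∈ Set.Icc c (c + δ), t ∈ Set.Icc (a i.castSucc) (a i.succ) ∧ t ∈ Set.Icc (b j.castSucc) (b j.succ) := by
    intro t ht
    have h1 : t ≤ min (a i.succ) (b j.succ) := by rw [hδdef] at ht; linarith [ht.2]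
    exact ⟨⟨le_trans hai ht.1, le_trans h1 (min_le_left _ _)⟩,
           ⟨le_trans hbj ht.1, le_trans h1 (min_le_right _ _)⟩⟩
  have hcf : f c = f (a i.castSucc) + kf * (c - a i.castSucc) :=
    hkf c ⟨hai, le_of_lt hai'⟩
  have hcg : g c = g (b j.castSucc) + kg * (c - b j.castSucc) :=
    hkg c ⟨hbj, le_of_lt hbj'⟩
  have hfa : ∀ t ∈ Set.Icc c (c + δ), f t = f c + kf * (t - c) := by
    intro t ht
    have := hkf t (hsub t ht).1
    rw [this, hcf]; ring
  have hga : ∀ t ∈ Set.Icc c (c + δ), g t = g c + kg * (t - c) := by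
    intro t ht
    have := hkg t (hsub t ht).2
    rw [this, hcg]; ring
  -- slopes differ
  have hkne : kf ≠ kg := by
    intro hkeq
    have hmem : c + δ ∈ S := by
      refine ⟨⟨by linarith, ?_⟩, ?_⟩
      · have h1 : a i.succ ≤ 1 := by rw [← halast]; exact ha.monotone (Fin.le_last _)
        rw [hδdef]; linarith [min_le_left (a i.succ) (b j.succ)]
      · intro s hs
        rcases le_or_gt s c with h | h
        · exact hcS.2 s ⟨hs.1, h⟩
        · have hsm : s ∈ Set.Icc c (c + δ) := ⟨le_of_lt h, hs.2⟩
          rw [hfa s hsm, hga s hsm, hceq, hkeq]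
    have := le_csSup hSbdd hmem
    rw [← hcdef] at this
    linarith
  rcases lt_or_gt_of_ne hkne with h | h
  · exact Or.inl ⟨c, ⟨hc0, hc1'⟩, hcS.2, δ, hδ, kf, kg, h, hfa, hga⟩
  · exact Or.inr ⟨c, ⟨hc0, hc1'⟩, fun t ht => (hcS.2 t ht).symm, δ, hδ, kg, kf, h, hga, hfa⟩

lemma plf_irrefl (f : ℝ → ℝ) : ¬ plfLt f f := by
  rintro ⟨c, _, _, δ, hδ, kf, kg, hk, h1, h2⟩
  have ht : c + δ ∈ Set.Icc c (c + δ) := ⟨by linarith, le_refl _⟩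
  have e1 := h1 _ ht
  have e2 := h2 _ ht
  have : kf * δ = kg * δ := by linarith
  have : kf = kg := mul_right_cancel₀ (ne_of_gt hδ) this
  linarith

/-- Asymmetry, half case `c₁ ≤ c₂`. -/
lemma plf_asymm_half {f g : ℝ → ℝ} {c₁ c₂ : ℝ}
    (h₁ : c₁ ∈ Set.Ico (0:ℝ) 1) (heq₁ : ∀ t ∈ Set.Icc (0:ℝ) c₁, f t = g t)
    (hd₁ : ∃ δ > (0:ℝ), ∃ kf kg : ℝ, kf < kg ∧
      (∀ t ∈ Set.Icc c₁ (c₁ + δ), f t = f c₁ + kf * (t - c₁)) ∧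
      (∀ t ∈ Set.Icc c₁ (c₁ + δ), g t = g c₁ + kg * (t - c₁)))
    (heq₂ : ∀ t ∈ Set.Icc (0:ℝ) c₂, g t = f t)
    (hd₂ : ∃ δ > (0:ℝ), ∃ kg' kf' : ℝ, kg' < kf' ∧
      (∀ t ∈ Set.Icc c₂ (c₂ + δ), g t = g c₂ + kg' * (t - c₂)) ∧
      (∀ t ∈ Set.Icc c₂ (c₂ + δ), f t = f c₂ + kf' * (t - c₂)))
    (hle : c₁ ≤ c₂) : False := by
  obtain ⟨δ₁, hδ₁, kf, kg, hk, hf₁, hg₁⟩ := hd₁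
  obtain ⟨δ₂, hδ₂, kg', kf', hk', hg₂, hf₂⟩ := hd₂
  rcases eq_or_lt_of_le hle with rfl | hlt
  · -- same point: slopes agree
    set δ := min δ₁ δ₂ with hδdef
    have hδ : 0 < δ := lt_min hδ₁ hδ₂
    have ht : c₁ + δ ∈ Set.Icc c₁ (c₁ + δ₁) := ⟨by linarith, by linarith [min_le_left δ₁ δ₂]⟩
    have ht' : c₁ + δ ∈ Set.Icc c₁ (c₁ + δ₂) := ⟨by linarith, by linarith [min_le_right δ₁ δ₂]⟩
    have e1 := hf₁ _ ht
    have e2 := hf₂ _ ht'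
    have e3 := hg₁ _ ht
    have e4 := hg₂ _ ht'
    have hkf : kf * δ = kf' * δ := by linarith
    have hkg : kg * δ = kg' * δ := by linarith
    have h5 : kf = kf' := mul_right_cancel₀ (ne_of_gt hδ) hkf
    have h6 : kg = kg' := mul_right_cancel₀ (ne_of_gt hδ) hkg
    linarith
  · -- c₁ < c₂ : f = g beyond c₁, so slopes at c₁ agree
    set t := min (c₁ + δ₁) c₂ with htdef
    have ht1 : c₁ < t := lt_min (by linarith) hlt
    have htm : t ∈ Set.Icc c₁ (c₁ + δ₁) := ⟨le_of_lt ht1, min_le_left _ _⟩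
    have hfg : g t = f t := heq₂ t ⟨by linarith [h₁.1], min_le_right _ _⟩
    have hfgc : g c₁ = f c₁ := heq₂ c₁ ⟨h₁.1, le_of_lt hlt⟩
    have e1 := hf₁ _ htm
    have e2 := hg₁ _ htm
    have : kf * (t - c₁) = kg * (t - c₁) := by linarith
    have : kf = kg := mul_right_cancel₀ (by linarith : t - c₁ ≠ 0) this
    linarith

lemma plf_asymm {f g : ℝ → ℝ} (h1 : plfLt f g) (h2 : plfLt g f) : False := by
  obtain ⟨c₁, hc₁, heq₁, hd₁⟩ := h1
  obtain ⟨c₂, hc₂, heq₂, hd₂⟩ := h2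
  rcases le_total c₁ c₂ with h | h
  · exact plf_asymm_half hc₁ heq₁ hd₁ heq₂ hd₂ h
  · exact plf_asymm_half hc₂ heq₂ hd₂ heq₁ hd₁ h

lemma plf_trans {f g h : ℝ → ℝ} (h1 : plfLt f g) (h2 : plfLt g h) : plfLt f h := by
  obtain ⟨c₁, hc₁, heq₁, δ₁, hδ₁, kf, kg, hk, hf₁, hg₁⟩ := h1
  obtain ⟨c₂, hc₂, heq₂, δ₂, hδ₂, kg', kh, hk', hg₂, hh₂⟩ := h2
  rcases lt_trichotomy c₁ c₂ with hlt | rfl | hlt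
  · -- c₁ < c₂ : first difference of f,h at c₁, h agrees with g there
    refine ⟨c₁, hc₁, ?_, min δ₁ (c₂ - c₁), lt_min hδ₁ (by linarith), kf, kg, hk, ?_, ?_⟩
    · intro t ht
      rw [heq₁ t ht, heq₂ t ⟨ht.1, le_trans ht.2 (le_of_lt hlt)⟩]
    · intro t ht
      exact hf₁ t ⟨ht.1, le_trans ht.2 (by linarith [min_le_left δ₁ (c₂ - c₁)])⟩
    · intro t ht
      have htc₂ : t ≤ c₂ := le_trans ht.2 (by linarith [min_le_right δ₁ (c₂ - c₁)])
      have h0t : (0:ℝ) ≤ t := le_trans hc₁.1 ht.1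
      rw [← heq₂ t ⟨h0t, htc₂⟩, ← heq₂ c₁ ⟨hc₁.1, le_of_lt hlt⟩]
      exact hg₁ t ⟨ht.1, le_trans ht.2 (by linarith [min_le_left δ₁ (c₂ - c₁)])⟩
  · -- same point: slopes of g agree, kf < kg = kg' < kh
    have hδ : (0:ℝ) < min δ₁ δ₂ := lt_min hδ₁ hδ₂
    have ht : c₁ + min δ₁ δ₂ ∈ Set.Icc c₁ (c₁ + δ₁) := ⟨by linarith, by linarith [min_le_left δ₁ δ₂]⟩
    have ht' : c₁ + min δ₁ δ₂ ∈ Set.Icc c₁ (c₁ + δ₂) := ⟨by linarith, by linarith [min_le_right δ₁ δ₂]⟩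
    have e1 := hg₁ _ ht
    have e2 := hg₂ _ ht'
    have hgg : kg = kg' := mul_right_cancel₀ (ne_of_gt hδ) (by linarith : kg * (min δ₁ δ₂) = kg' * (min δ₁ δ₂))
    refine ⟨c₁, hc₁, ?_, min δ₁ δ₂, hδ, kf, kh, by linarith, ?_, ?_⟩
    · intro t htt; rw [heq₁ t htt, heq₂ t htt]
    · intro t htt; exact hf₁ t ⟨htt.1, by linarith [htt.2, min_le_left δ₁ δ₂]⟩
    · intro t htt; exact hh₂ t ⟨htt.1, by linarith [htt.2, min_le_right δ₁ δ₂]⟩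
  · -- c₂ < c₁ : first difference of f,h at c₂, f agrees with g there
    refine ⟨c₂, hc₂, ?_, min δ₂ (c₁ - c₂), lt_min hδ₂ (by linarith), kg', kh, hk', ?_, ?_⟩
    · intro t ht
      rw [heq₁ t ⟨ht.1, le_trans ht.2 (le_of_lt hlt)⟩, heq₂ t ht]
    · intro t ht
      have htc₁ : t ≤ c₁ := le_trans ht.2 (by linarith [min_le_right δ₂ (c₁ - c₂)])
      have h0t : (0:ℝ) ≤ t := le_trans hc₂.1 ht.1
      rw [heq₁ t ⟨h0t, htc₁⟩, heq₁ c₂ ⟨hc₂.1, le_of_lt hlt⟩]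
      exact hg₂ t ⟨ht.1, le_trans ht.2 (by linarith [min_le_left δ₂ (c₁ - c₂)])⟩
    · intro t ht
      exact hh₂ t ⟨ht.1, le_trans ht.2 (by linarith [min_le_left δ₂ (c₁ - c₂)])⟩

lemma plf_left_inv {f g h : ℝ → ℝ} (hf : IsPLF f) (hg : IsPLF g) (hh : IsPLF h)
    (hfg : plfLt f g) : plfLt (h ∘ f) (h ∘ g) := by
  obtain ⟨c, hcm, heq, δ, hδ, kf, kg, hk, hfa, hga⟩ := hfg
  obtain ⟨hf0, hf1, hfm, _⟩ := hf
  obtain ⟨hg0, hg1, hgm, _⟩ := hg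
  obtain ⟨hh0, hh1, hhm, p, u, hu, hu0, hulast, huaff⟩ := hh
  obtain ⟨hc0, hc1⟩ := hcm
  -- restrict δ so that [c, c+δ₀] ⊆ [0,1]
  set δ₀ := min δ (1 - c) with hδ₀def
  have hδ₀ : 0 < δ₀ := lt_min hδ (by linarith)
  have hδ₀δ : δ₀ ≤ δ := min_le_left _ _
  have hδ₀1 : c + δ₀ ≤ 1 := by have := min_le_right δ (1 - c); linarith
  -- f c ∈ [0, 1)
  have hfc0 : 0 ≤ f c := by
    rw [← hf0]
    exact hfm.monotoneOn ⟨le_refl _, by norm_num⟩ ⟨hc0, le_of_lt hc1⟩ hc0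
  have hfc1 : f c < 1 := by
    rw [← hf1]
    exact hfm ⟨hc0, le_of_lt hc1⟩ ⟨by norm_num, le_refl _⟩ hc1
  have hgc : g c = f c := (heq c ⟨hc0, le_refl _⟩).symm
  -- slopes positive
  have hkfpos : 0 < kf := by
    have h1 := hfa (c + δ₀) ⟨by linarith, by linarith⟩
    have h2 : f c < f (c + δ₀) := hfm ⟨hc0, le_of_lt hc1⟩ ⟨by linarith, hδ₀1⟩ (by linarith)
    nlinarith
  have hkgpos : 0 < kg := by
    have h1 := hga (c + δ₀) ⟨by linarith, by linarith⟩
    have h2 : g c < g (c + δ₀) := hgm ⟨hc0, le_of_lt hc1⟩ ⟨by linarith, hδ₀1⟩ (by linarith)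
    nlinarith
  -- interval of h containing f c
  obtain ⟨i, hui, hui'⟩ := plf_find_interval (b := u) (x := f c) (le_of_eq_of_le hu0 hfc0) (lt_of_lt_of_le hfc1 (le_of_eq hulast.symm))
  obtain ⟨kh, hkh⟩ := huaff i
  have hu01 : ∀ v : Fin (p+1), u v ∈ Set.Icc (0:ℝ) 1 := by
    intro v
    constructor
    · rw [← hu0]; exact hu.monotone (Fin.zero_le _)
    · rw [← hulast]; exact hu.monotone (Fin.le_last _)
  have hkhpos : 0 < kh := by
    have hlt : u i.castSucc < u i.succ := hu Fin.castSucc_lt_succ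
    have h1 := hkh (u i.succ) ⟨le_of_lt hlt, le_refl _⟩
    have h2 : h (u i.castSucc) < h (u i.succ) := hhm (hu01 _) (hu01 _) hlt
    nlinarith
  -- final δ
  set δ₁ := min δ₀ (min ((u i.succ - f c) / kf) ((u i.succ - f c) / kg)) with hδ₁def
  have hδ₁ : 0 < δ₁ := by
    apply lt_min hδ₀
    apply lt_min
    · exact div_pos (by linarith) hkfpos
    · exact div_pos (by linarith) hkgpos
  have hδ₁δ₀ : δ₁ ≤ δ₀ := min_le_left _ _
  have hδ₁f : kf * δ₁ ≤ u i.succ - f c := by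
    have h1 : δ₁ ≤ (u i.succ - f c) / kf := le_trans (min_le_right _ _) (min_le_left _ _)
    calc kf * δ₁ ≤ kf * ((u i.succ - f c) / kf) := by
          exact mul_le_mul_of_nonneg_left h1 (le_of_lt hkfpos)
      _ = u i.succ - f c := by field_simp
  have hδ₁g : kg * δ₁ ≤ u i.succ - f c := by
    have h1 : δ₁ ≤ (u i.succ - f c) / kg := le_trans (min_le_right _ _) (min_le_right _ _)
    calc kg * δ₁ ≤ kg * ((u i.succ - f c) / kg) := by
          exact mul_le_mul_of_nonneg_left h1 (le_of_lt hkgpos)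
      _ = u i.succ - f c := by field_simp
  have hhfc : h (f c) = h (u i.castSucc) + kh * (f c - u i.castSucc) :=
    hkh (f c) ⟨hui, le_of_lt hui'⟩
  refine ⟨c, ⟨hc0, hc1⟩, ?_, δ₁, hδ₁, kh * kf, kh * kg, ?_, ?_, ?_⟩
  · intro t ht
    simp only [Function.comp_apply]
    rw [heq t ht]
  · exact (mul_lt_mul_iff_right₀ hkhpos).mpr hk
  · intro t ht
    simp only [Function.comp_apply]
    have htδ : t ∈ Set.Icc c (c + δ) := ⟨ht.1, by linarith [ht.2]⟩
    rw [hfa t htδ]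
    have hmem : f c + kf * (t - c) ∈ Set.Icc (u i.castSucc) (u i.succ) := by
      constructor
      · have : 0 ≤ kf * (t - c) := mul_nonneg (le_of_lt hkfpos) (by linarith [ht.1])
        linarith
      · have : kf * (t - c) ≤ kf * δ₁ := mul_le_mul_of_nonneg_left (by linarith [ht.2]) (le_of_lt hkfpos)
        linarith
    rw [hkh _ hmem, hhfc]
    ring
  · intro t ht
    simp only [Function.comp_apply]
    have htδ : t ∈ Set.Icc c (c + δ) := ⟨ht.1, by linarith [ht.2]⟩
    rw [hga t htδ, hgc]
    have hmem : f c + kg * (t - c) ∈ Set.Icc (u i.castSucc) (u i.succ) := by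
      constructor
      · have : 0 ≤ kg * (t - c) := mul_nonneg (le_of_lt hkgpos) (by linarith [ht.1])
        linarith
      · have : kg * (t - c) ≤ kg * δ₁ := mul_le_mul_of_nonneg_left (by linarith [ht.2]) (le_of_lt hkgpos)
        linarith
    rw [hkh _ hmem, hhfc]
    ring

lemma plf_right_inv {f g h : ℝ → ℝ} (hf : IsPLF f) (hg : IsPLF g) (hh : IsPLF h)
    (hfg : plfLt f g) : plfLt (f ∘ h) (g ∘ h) := by
  obtain ⟨c, ⟨hc0, hc1⟩, heq, δ, hδ, kf, kg, hk, hfa, hga⟩ := hfg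
  obtain ⟨hh0, hh1, hhm, p, u, hu, hu0, hulast, huaff⟩ := hh
  have hu01 : ∀ v : Fin (p+1), u v ∈ Set.Icc (0:ℝ) 1 := by
    intro v
    constructor
    · rw [← hu0]; exact hu.monotone (Fin.zero_le _)
    · rw [← hulast]; exact hu.monotone (Fin.le_last _)
  -- find interval of h's partition with h(u_i) ≤ c < h(u_{i+1})
  have hcomp : StrictMono (fun v : Fin (p+1) => h (u v)) := by
    intro v w hvw
    exact hhm (hu01 v) (hu01 w) (hu hvw)
  obtain ⟨i, hui, hui'⟩ := plf_find_interval (b := fun v => h (u v)) (x := c)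
    (by show h (u 0) ≤ c; rw [hu0, hh0]; exact hc0)
    (by show c < h (u (Fin.last p)); rw [hulast, hh1]; exact hc1)
  obtain ⟨kh, hkh⟩ := huaff i
  have huilt : u i.castSucc < u i.succ := hu Fin.castSucc_lt_succ
  have hkhpos : 0 < kh := by
    have h1 := hkh (u i.succ) ⟨le_of_lt huilt, le_refl _⟩
    have h2 : h (u i.castSucc) < h (u i.succ) := hhm (hu01 _) (hu01 _) huilt
    nlinarith
  -- the preimage point c'
  obtain ⟨c', hc'def⟩ : ∃ x, x = u i.castSucc + (c - h (u i.castSucc)) / kh := ⟨_, rfl⟩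
  have hc'ge : u i.castSucc ≤ c' := by
    have : 0 ≤ (c - h (u i.castSucc)) / kh := div_nonneg (by linarith) (le_of_lt hkhpos)
    linarith
  have hsucc := hkh (u i.succ) ⟨le_of_lt huilt, le_refl _⟩
  have hc'lt : c' < u i.succ := by
    rw [hc'def]
    have h1 : (c - h (u i.castSucc)) / kh < u i.succ - u i.castSucc := by
      rw [div_lt_iff₀ hkhpos]
      nlinarith
    linarith
  have hhc' : h c' = c := by
    have := hkh c' ⟨hc'ge, le_of_lt hc'lt⟩
    rw [this, hc'def]
    field_simp
    ring
  have hc'0 : 0 ≤ c' := le_trans (hu01 i.castSucc).1 hc'ge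
  have hc'1 : c' < 1 := lt_of_lt_of_le hc'lt (hu01 i.succ).2
  -- affine form of h near c'
  have hhaff : ∀ t ∈ Set.Icc c' (u i.succ), h t = c + kh * (t - c') := by
    intro t ht
    have := hkh t ⟨le_trans hc'ge ht.1, ht.2⟩
    rw [this, ← hhc', hkh c' ⟨hc'ge, le_of_lt hc'lt⟩]
    ring
  obtain ⟨δ₂, hδ₂def⟩ : ∃ x, x = min (u i.succ - c') (δ / kh) := ⟨_, rfl⟩
  have hδ₂A : δ₂ ≤ u i.succ - c' := by rw [hδ₂def]; exact min_le_left _ _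
  have hδ₂B : δ₂ ≤ δ / kh := by rw [hδ₂def]; exact min_le_right _ _
  have hδ₂ : 0 < δ₂ := by rw [hδ₂def]; exact lt_min (by linarith) (div_pos hδ hkhpos)
  have hmemh : ∀ t ∈ Set.Icc c' (c' + δ₂), h t ∈ Set.Icc c (c + δ) := by
    intro t ht
    have ht' : t ∈ Set.Icc c' (u i.succ) := ⟨ht.1, by linarith [ht.2, hδ₂A]⟩
    rw [hhaff t ht']
    constructor
    · have : 0 ≤ kh * (t - c') := mul_nonneg (le_of_lt hkhpos) (by linarith [ht.1])
      linarith
    · have h1 : t - c' ≤ δ / kh := by linarith [ht.2, hδ₂B]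
      have h2 : kh * (t - c') ≤ kh * (δ / kh) := mul_le_mul_of_nonneg_left h1 (le_of_lt hkhpos)
      have h3 : kh * (δ / kh) = δ := by field_simp
      linarith
  refine ⟨c', ⟨hc'0, hc'1⟩, ?_, δ₂, hδ₂, kf * kh, kg * kh, ?_, ?_, ?_⟩
  · intro t ht
    simp only [Function.comp_apply]
    have hht : h t ∈ Set.Icc (0:ℝ) c := by
      constructor
      · rw [← hh0]
        exact hhm.monotoneOn ⟨le_refl _, by norm_num⟩ ⟨ht.1, by linarith [ht.2]⟩ ht.1
      · rw [← hhc']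
        exact hhm.monotoneOn ⟨ht.1, by linarith [ht.2]⟩ ⟨hc'0, le_of_lt hc'1⟩ ht.2
    exact heq _ hht
  · exact (mul_lt_mul_iff_left₀ hkhpos).mpr hk
  · intro t ht
    simp only [Function.comp_apply]
    rw [hfa _ (hmemh t ht), hhc']
    have ht' : t ∈ Set.Icc c' (u i.succ) := ⟨ht.1, by linarith [ht.2, hδ₂A]⟩
    rw [hhaff t ht']
    ring
  · intro t ht
    simp only [Function.comp_apply]
    rw [hga _ (hmemh t ht), hhc']
    have ht' : t ∈ Set.Icc c' (u i.succ) := ⟨ht.1, by linarith [ht.2, hδ₂A]⟩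
    rw [hhaff t ht']
    ring


/-- The relation `plfLt` is a total order on the group `PLF₊[0,1]` of increasing
piecewise linear homeomorphisms of `[0,1]` (irreflexive, asymmetric and total on
functions distinct on `[0,1]`, transitive), invariant under composition on both
sides. -/
theorem stmt_6 :
    (∀ f : ℝ → ℝ, IsPLF f → ¬ plfLt f f) ∧
    (∀ f g : ℝ → ℝ, IsPLF f → IsPLF g → ¬ Set.EqOn f g (Set.Icc 0 1) →
      (plfLt f g ↔ ¬ plfLt g f)) ∧
    (∀ f g h : ℝ → ℝ, IsPLF f → IsPLF g → IsPLF h →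
      plfLt f g → plfLt g h → plfLt f h) ∧
    (∀ f g h : ℝ → ℝ, IsPLF f → IsPLF g → IsPLF h → plfLt f g →
      plfLt (h ∘ f) (h ∘ g) ∧ plfLt (f ∘ h) (g ∘ h)) := by
  refine ⟨fun f _ => plf_irrefl f, fun f g hf hg hne => ?_, fun f g h _ _ _ h1 h2 => plf_trans h1 h2,
    fun f g h hf hg hh hfg => ⟨plf_left_inv hf hg hh hfg, plf_right_inv hf hg hh hfg⟩⟩
  constructor
  · exact fun h1 h2 => plf_asymm h1 h2
  · exact fun h2 => (plf_total hf hg hne).resolve_right h2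
end

section
/- In a bi-orderable group, the centralizer property holds: if aⁿ commutes with b for some nonzero integer n, then a commutes with b. -/
/-- A group `G` is bi-orderable if it admits a total order invariant under
left and right multiplication. -/
def BiOrderable (G : Type*) [Group G] : Prop :=
  ∃ r : LinearOrder G,
    (∀ a b c : G, r.lt a b → r.lt (c * a) (c * b)) ∧
    (∀ a b c : G, r.lt a b → r.lt (a * c) (b * c))

/-- In a bi-orderable group, if `aⁿ` commutes with `b` for some nonzero
integer `n`, then `a` commutes with `b` (the centralizer property). -/
theorem stmt_14 {G : Type*} [Group G] (hG : BiOrderable G)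
    (a b : G) (n : ℤ) (hn : n ≠ 0) (h : a ^ n * b = b * a ^ n) :
    a * b = b * a := by
  obtain ⟨r, hl, hr⟩ := hG
  letI := r
  -- strict monotonicity of powers
  have pow_lt : ∀ (k : ℕ) (x y : G), r.lt x y → r.lt (x ^ (k + 1)) (y ^ (k + 1)) := by
    intro k
    induction k with
    | zero => intro x y hxy; simpa using hxy
    | succ k ih =>
      intro x y hxy
      have h1 : r.lt (x ^ (k + 1)) (y ^ (k + 1)) := ih x y hxy
      have h2 : r.lt (x * x ^ (k + 1)) (x * y ^ (k + 1)) := hl _ _ _ h1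
      have h3 : r.lt (x * y ^ (k + 1)) (y * y ^ (k + 1)) := hr _ _ _ hxy
      have := lt_trans h2 h3
      simpa [pow_succ'] using this
  -- uniqueness of roots
  have root_unique : ∀ (k : ℕ) (x y : G), x ^ (k + 1) = y ^ (k + 1) → x = y := by
    intro k x y hxy
    rcases lt_trichotomy x y with hlt | heq | hgt
    · exact absurd hxy (by have := pow_lt k x y hlt; exact fun hh => lt_irrefl _ (hh ▸ this))
    · exact heq
    · exact absurd hxy.symm (by have := pow_lt k y x hgt; exact fun hh => lt_irrefl _ (hh ▸ this))
  set c : G := b * a * b⁻¹ with hc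
  have hcn : c ^ n = a ^ n := by
    have hconj : c ^ n = b * a ^ n * b⁻¹ := by
      rw [hc]; exact conj_zpow
    rw [hconj, ← h, mul_assoc, mul_inv_cancel, mul_one]
  have hm : (0 : ℕ) < n.natAbs := Int.natAbs_pos.mpr hn
  have hcm : c ^ n.natAbs = a ^ n.natAbs := by
    have : c ^ (n.natAbs : ℤ) = a ^ (n.natAbs : ℤ) := by
      rcases Int.natAbs_eq n with he | he
      · rw [show (n.natAbs : ℤ) = n from he.symm, hcn]
      · rw [show (n.natAbs : ℤ) = -n by omega, zpow_neg, zpow_neg, hcn]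
    rw [zpow_natCast, zpow_natCast] at this
    exact this
  have hca : c = a := by
    obtain ⟨k, hk⟩ : ∃ k, n.natAbs = k + 1 := ⟨n.natAbs - 1, by omega⟩
    exact root_unique k c a (by rw [← hk]; exact hcm)
  have : b * a * b⁻¹ = a := hca
  have := congrArg (· * b) this
  simpa [mul_assoc] using this.symm
end

section
/- Every virtually abelian subgroup of a group with the centralizer property is abelian. In particular, every virtually abelian subgroup of a bi-orderable group is abelian. -/
/-- `G` has the centralizer property: `[aⁿ, b] = 1` with `n ≠ 0` implies
`[a, b] = 1`. -/
def CentralizerProperty (G : Type*) [Group G] : Prop :=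
  ∀ (a b : G) (n : ℤ), n ≠ 0 → a ^ n * b = b * a ^ n → a * b = b * a

/-- In a bi-ordered group, strict inequalities are preserved by positive powers. -/
theorem biOrderable_pow_lt {G : Type*} [Group G] (r : LinearOrder G)
    (hl : ∀ a b c : G, r.lt a b → r.lt (c * a) (c * b))
    (hr : ∀ a b c : G, r.lt a b → r.lt (a * c) (b * c))
    {x y : G} (h : r.lt x y) : ∀ n : ℕ, r.lt (x ^ (n + 1)) (y ^ (n + 1)) := by
  letI := r
  intro n
  induction n with
  | zero => simpa using h
  | succ n ih =>
    have h1 : x * x ^ (n + 1) < x * y ^ (n + 1) := hl _ _ _ ih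
    have h2 : x * y ^ (n + 1) < y * y ^ (n + 1) := hr _ _ _ h
    calc x ^ (n + 2) = x * x ^ (n + 1) := by rw [pow_succ']
      _ < y * y ^ (n + 1) := lt_trans h1 h2
      _ = y ^ (n + 2) := by rw [← pow_succ']

/-- In a bi-ordered group, taking positive powers is injective. -/
theorem biOrderable_pow_inj {G : Type*} [Group G] (r : LinearOrder G)
    (hl : ∀ a b c : G, r.lt a b → r.lt (c * a) (c * b))
    (hr : ∀ a b c : G, r.lt a b → r.lt (a * c) (b * c))
    {x y : G} {n : ℕ} (hn : n ≠ 0) (h : x ^ n = y ^ n) : x = y := by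
  letI := r
  obtain ⟨m, rfl⟩ : ∃ m, n = m + 1 := ⟨n - 1, by omega⟩
  rcases lt_trichotomy x y with hlt | heq | hgt
  · exact absurd h (ne_of_lt (biOrderable_pow_lt r hl hr hlt m))
  · exact heq
  · exact absurd h.symm (ne_of_lt (biOrderable_pow_lt r hl hr hgt m))

/-- Bi-orderable groups have the centralizer property. -/
theorem biOrderable_centralizerProperty {G : Type*} [Group G]
    (hbo : BiOrderable G) : CentralizerProperty G := by
  obtain ⟨r, hl, hr⟩ := hbo
  intro a b n hn hcomm
  -- conjugate of a by b has the same n-th power as a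
  have key : (b⁻¹ * a * b) ^ n = a ^ n := by
    have h1 : (b⁻¹ * a * b) ^ n = b⁻¹ * a ^ n * b := by
      have := conj_zpow (i := n) (a := b⁻¹) (b := a)
      simpa using this
    rw [h1, mul_assoc, hcomm]
    group
  have key2 : (b⁻¹ * a * b) ^ n.natAbs = a ^ n.natAbs := by
    rcases Int.natAbs_eq n with h | h
    · rw [← zpow_natCast, ← zpow_natCast, ← h]; exact key
    · have hneg : ((n.natAbs : ℤ)) = -n := by omega
      rw [← zpow_natCast, ← zpow_natCast, hneg, zpow_neg, zpow_neg, key]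
  have := biOrderable_pow_inj r hl hr (Int.natAbs_ne_zero.mpr hn) key2
  have hconj : b⁻¹ * a * b = a := this
  calc a * b = b * (b⁻¹ * a * b) := by group
    _ = b * a := by rw [hconj]

/-- Every virtually abelian subgroup of a group with the centralizer property
is abelian; in particular, every virtually abelian subgroup of a bi-orderable
group is abelian. -/
theorem stmt_15 {G : Type*} [Group G] (H : Subgroup G)
    (K : Subgroup G) (hKH : K ≤ H)
    (hKab : ∀ a b : G, a ∈ K → b ∈ K → a * b = b * a)
    (hKfin : (K.subgroupOf H).FiniteIndex) :
    (CentralizerProperty G → ∀ a b : G, a ∈ H → b ∈ H → a * b = b * a) ∧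
    (BiOrderable G → ∀ a b : G, a ∈ H → b ∈ H → a * b = b * a) := by
  have hrel : K.relIndex H ≠ 0 := by
    rw [Subgroup.relIndex]
    exact hKfin.index_ne_zero
  have hpow : ∀ a ∈ H, ∃ n : ℕ, 0 < n ∧ a ^ n ∈ K := by
    intro a ha
    obtain ⟨n, hn, -, hmem⟩ := Subgroup.exists_pow_mem_of_relIndex_ne_zero hrel ha
    exact ⟨n, hn, hmem.1⟩
  have main : CentralizerProperty G → ∀ a b : G, a ∈ H → b ∈ H → a * b = b * a := by
    intro hc a b ha hb
    obtain ⟨m, hm, ham⟩ := hpow a ha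
    obtain ⟨n, hn, hbn⟩ := hpow b hb
    have h1 : a ^ m * b ^ n = b ^ n * a ^ m := hKab _ _ ham hbn
    have h2 : a * b ^ n = b ^ n * a := by
      apply hc a (b ^ n) (m : ℤ) (by exact_mod_cast hm.ne')
      rw [zpow_natCast]; exact h1
    have h3 : b * a = a * b := by
      apply hc b a (n : ℤ) (by exact_mod_cast hn.ne')
      rw [zpow_natCast]; exact h2.symm
    exact h3.symm
  exact ⟨main, fun hbo => main (biOrderable_centralizerProperty hbo)⟩
end
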